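/- Let n₋ ≥ 1, n₊ ≥ 0, n = n₋ + n₊, n_w ≥ 1, n_v ≥ 1, n̄₋ ≥ 1. Let S ∈ ℝ^{n_v×n_v} have all eigenvalues purely imaginary, let b_y ∈ ℝ^{n_v}, and set S̃ = I_{n̄₋} ⊗ S and B̃_y = I_{n̄₋} ⊗ b_y. Let F̃_w ∈ ℝ^{n_w×n_w} be Hurwitz. Let Λ : [0,1] → ℝ^{n×n} be diagonal with continuously differentiable diagonal entries λ₁(z) ≥ … ≥ λ_{n₋}(z) > 0 > λ_{n₋+1}(z) ≥ … ≥ λ_n(z) for all z ∈ [0,1], let Ã₀ : [0,1] → ℝ^{n×n₋} be continuous with E₋ᵀÃ₀(z) strictly lower triangular for all z, and let Q₀ ∈ ℝ^{n₊×n₋}, B_w ∈ ℝ^{n_w×n₋}, C̃_w ∈ ℝ^{n̄₋×n_w}, C_{x,0}, C_{x,1} ∈ ℝ^{n̄₋×n} be constant and C̃_x : [0,1] → ℝ^{n̄₋×n} continuous. Then the decoupling equations of the multi-agent system have exactly one solution consisting of a continuously differentiable Π_x : [0,1] → ℝ^{n̄₋n_v×n} and a matrix Π_w ∈ ℝ^{n̄₋n_v×n_w}.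 -/

import Mathlib

open Matrix Set
open scoped Kronecker Topology


/-- `E₋ = [I_{n₋}; 0] ∈ ℝ^{(n₋+n₊)×n₋}`. -/
def Eminus (nm np : ℕ) : Matrix (Fin (nm + np)) (Fin nm) ℝ :=
  Matrix.of fun i j => if (i : ℕ) = (j : ℕ) then 1 else 0

/-- `E₊ = [0; I_{n₊}] ∈ ℝ^{(n₋+n₊)×n₊}`. -/
def Eplus (nm np : ℕ) : Matrix (Fin (nm + np)) (Fin np) ℝ :=
  Matrix.of fun i j => if (i : ℕ) = nm + (j : ℕ) then 1 else 0

/-- A real square matrix is Hurwitz if every eigenvalue (root of the characteristic polynomial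
of its complexification) has negative real part. -/
def IsHurwitzR {n : Type*} [Fintype n] [DecidableEq n] (M : Matrix n n ℝ) : Prop :=
  ∀ μ : ℂ, (M.map Complex.ofReal).charpoly.IsRoot μ → μ.re < 0

/-- The decoupling equations of the multi-agent system (conditions (i)–(iv)) for the unknowns
`Px : [0,1] → ℝ^{n̄₋n_v×n}` and `Pw ∈ ℝ^{n̄₋n_v×n_w}`. -/
def DecouplingMAS (nm np nw nv nb : ℕ)
    (St : Matrix (Fin nb × Fin nv) (Fin nb × Fin nv) ℝ)
    (By : Matrix (Fin nb × Fin nv) (Fin nb) ℝ)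
    (Fw : Matrix (Fin nw) (Fin nw) ℝ)
    (Λ : ℝ → Matrix (Fin (nm + np)) (Fin (nm + np)) ℝ)
    (A₀ : ℝ → Matrix (Fin (nm + np)) (Fin nm) ℝ)
    (Q₀ : Matrix (Fin np) (Fin nm) ℝ)
    (Bw : Matrix (Fin nw) (Fin nm) ℝ)
    (Cw : Matrix (Fin nb) (Fin nw) ℝ)
    (Cx0 Cx1 : Matrix (Fin nb) (Fin (nm + np)) ℝ)
    (Cx : ℝ → Matrix (Fin nb) (Fin (nm + np)) ℝ)
    (Px : ℝ → Matrix (Fin nb × Fin nv) (Fin (nm + np)) ℝ)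
    (Pw : Matrix (Fin nb × Fin nv) (Fin nw) ℝ) : Prop :=
  -- (i)
  St * Pw - Pw * Fw = -(By * Cw) ∧
  -- (ii)
  (∀ z ∈ Ioo (0 : ℝ) 1,
    (Matrix.of fun i j => derivWithin (fun t => (Px t * Λ t) i j) (Icc 0 1) z)
        + St * Px z = -(By * Cx z)) ∧
  -- (iii)
  (Px 0 * Λ 0 * (Eplus nm np * Q₀ + Eminus nm np)
      - (Matrix.of fun i j => ∫ ζ in (0 : ℝ)..1, (Px ζ * A₀ ζ) i j)
    = Pw * Bw - By * Cx0 * (Eplus nm np * Q₀ + Eminus nm np)) ∧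
  -- (iv)
  (Px 1 * Λ 1 * Eplus nm np = By * Cx1 * Eplus nm np)

section Helpers

open Set NormedSpace intervalIntegral Polynomial
open scoped Topology

set_option maxHeartbeats 1000000
set_option synthInstance.maxHeartbeats 400000



/-- Constancy on `Icc 0 1` from zero derivative on `Ioo 0 1` and continuity. -/
lemma constOn_Icc_of_deriv_zero {F : Type*} [NormedAddCommGroup F] [NormedSpace ℝ F]
    {f : ℝ → F} (hc : ContinuousOn f (Icc 0 1))
    (hd : ∀ z ∈ Ioo (0:ℝ) 1, HasDerivAt f 0 z) :
    ∀ x ∈ Icc (0:ℝ) 1, ∀ y ∈ Icc (0:ℝ) 1, f x = f y := by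
  have hIoo : ∀ x ∈ Ioo (0:ℝ) 1, ∀ y ∈ Ioo (0:ℝ) 1, x ≤ y → f y = f x := by
    intro x hx y hy hxy
    have : ∀ t ∈ Icc x y, f t = f x := by
      apply constant_of_has_deriv_right_zero (hc.mono ?_)
      · intro t ht
        have htI : t ∈ Ioo (0:ℝ) 1 := ⟨lt_of_lt_of_le hx.1 ht.1, ht.2.trans hy.2⟩
        exact (hd t htI).hasDerivWithinAt
      · exact fun t ht => ⟨le_trans hx.1.le ht.1, le_trans ht.2 hy.2.le⟩
    exact this y (right_mem_Icc.2 hxy)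
  have hIoo' : ∀ x ∈ Ioo (0:ℝ) 1, ∀ y ∈ Ioo (0:ℝ) 1, f x = f y := by
    intro x hx y hy
    rcases le_total x y with h | h
    · exact (hIoo x hx y hy h).symm
    · exact hIoo y hy x hx h
  have hhalf : (1/2 : ℝ) ∈ Ioo (0:ℝ) 1 := by norm_num
  suffices h : ∀ x ∈ Icc (0:ℝ) 1, f x = f (1/2) by
    intro x hx y hy; rw [h x hx, h y hy]
  intro x hx
  have key : ∀ w : ℝ, w ∈ Icc (0:ℝ) 1 → w ∈ closure (Ioo (0:ℝ) 1) → f w = f (1/2) := by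
    intro w hw hwc
    have hne : (𝓝[Ioo (0:ℝ) 1] w).NeBot := mem_closure_iff_nhdsWithin_neBot.mp hwc
    have h1 : Filter.Tendsto f (𝓝[Ioo (0:ℝ) 1] w) (𝓝 (f w)) :=
      (hc.continuousWithinAt hw).mono_left (nhdsWithin_mono _ Ioo_subset_Icc_self)
    have h2 : Filter.Tendsto f (𝓝[Ioo (0:ℝ) 1] w) (𝓝 (f (1/2))) := by
      apply Filter.Tendsto.congr' _ tendsto_const_nhds
      filter_upwards [self_mem_nhdsWithin] with t ht
      exact (hIoo' t ht (1/2) hhalf).symm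
    exact tendsto_nhds_unique h1 h2
  apply key x hx
  rw [closure_Ioo (by norm_num : (0:ℝ) ≠ 1)]
  exact hx

variable {E : Type*} [NormedAddCommGroup E] [NormedSpace ℝ E] [CompleteSpace E]

noncomputable instance instNormedAlgebraRatCLMPort : NormedAlgebra ℚ (E →L[ℝ] E) :=
  NormedAlgebra.restrictScalars ℚ ℝ (E →L[ℝ] E)

lemma ode_exists (T : E →L[ℝ] E) {a : ℝ → ℝ} {g : ℝ → E}
    (ha : Continuous a) (hg : Continuous g) (t₀ : ℝ) (y₀ : E) :
    ∃ y : ℝ → E, ContDiff ℝ 1 y ∧ y t₀ = y₀ ∧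
      ∀ z, HasDerivAt y (a z • T (y z) + g z) z := by
  set α : ℝ → ℝ := fun z => ∫ t in t₀..z, a t with hα_def
  have hα : ∀ z, HasDerivAt α (a z) z := fun z =>
    (ha.integral_hasStrictDerivAt t₀ z).hasDerivAt
  have hαc : Continuous α := by
    have : Differentiable ℝ α := fun z => (hα z).differentiableAt
    exact this.continuous
  set W : ℝ → E →L[ℝ] E := fun z => exp (α z • T) with hW_def
  have hWd : ∀ z, HasDerivAt W (a z • (T * W z)) z := by
    intro z
    have h1 := (hasDerivAt_exp_smul_const' (𝕂 := ℝ) T (α z)).scomp z (hα z)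
    exact h1
  have hWc : Continuous W := exp_continuous.comp (hαc.smul continuous_const)
  set Wi : ℝ → E →L[ℝ] E := fun z => exp ((-α z) • T) with hWi_def
  have hWic : Continuous Wi := exp_continuous.comp ((hαc.neg).smul continuous_const)
  have hWWi : ∀ z, W z * Wi z = 1 := by
    intro z
    rw [hW_def, hWi_def]
    show exp (α z • T) * exp ((-α z) • T) = 1
    rw [neg_smul, ← NormedSpace.exp_add_of_commute (Commute.refl (α z • T)).neg_right, add_neg_cancel,
      exp_zero]
  set h : ℝ → E := fun s => Wi s (g s) with hh_def
  have hhc : Continuous h := hWic.clm_apply hg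
  set c : ℝ → E := fun z => y₀ + ∫ s in t₀..z, h s with hc_def
  have hcd : ∀ z, HasDerivAt c (h z) z := fun z =>
    ((hhc.integral_hasStrictDerivAt t₀ z).hasDerivAt).const_add y₀
  set y : ℝ → E := fun z => W z (c z) with hy_def
  have hyd : ∀ z, HasDerivAt y (a z • T (y z) + g z) z := by
    intro z
    have hd := (hWd z).clm_apply (hcd z)
    have he : (a z • (T * W z)) (c z) + (W z) (h z) = a z • T (W z (c z)) + g z := by
      have h2 : (W z) (h z) = g z := by
        rw [hh_def]
        have : (W z) (Wi z (g z)) = (W z * Wi z) (g z) := rfl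
        rw [this, hWWi, ContinuousLinearMap.one_apply]
      rw [h2, ContinuousLinearMap.smul_apply, ContinuousLinearMap.mul_apply]
    rwa [he] at hd
  have hyc : Continuous y := by
    have : Differentiable ℝ y := fun z => (hyd z).differentiableAt
    exact this.continuous
  refine ⟨y, ?_, ?_, hyd⟩
  · rw [contDiff_one_iff_deriv]
    constructor
    · exact fun z => (hyd z).differentiableAt
    · have : deriv y = fun z => a z • T (y z) + g z := by
        funext z; exact (hyd z).deriv
      rw [this]
      exact ((ha.smul ((T.continuous).comp hyc)).add hg)
  · have : α t₀ = 0 := integral_same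
    simp [hy_def, hW_def, this, hc_def, exp_zero]

lemma ode_unique (T : E →L[ℝ] E) {a : ℝ → ℝ} {g : ℝ → E} (ha : Continuous a)
    {u v : ℝ → E} {t₀ : ℝ} (ht₀ : t₀ ∈ Icc (0:ℝ) 1)
    (hu : ContinuousOn u (Icc 0 1)) (hv : ContinuousOn v (Icc 0 1))
    (hud : ∀ z ∈ Ioo (0:ℝ) 1, HasDerivAt u (a z • T (u z) + g z) z)
    (hvd : ∀ z ∈ Ioo (0:ℝ) 1, HasDerivAt v (a z • T (v z) + g z) z)
    (h0 : u t₀ = v t₀) : ∀ z ∈ Icc (0:ℝ) 1, u z = v z := by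
  set α : ℝ → ℝ := fun z => ∫ t in t₀..z, a t with hα_def
  have hα : ∀ z, HasDerivAt α (a z) z := fun z =>
    (ha.integral_hasStrictDerivAt t₀ z).hasDerivAt
  have hαc : Continuous α := by
    have : Differentiable ℝ α := fun z => (hα z).differentiableAt
    exact this.continuous
  set Wi : ℝ → E →L[ℝ] E := fun z => exp ((-α z) • T) with hWi_def
  have hWid : ∀ z, HasDerivAt Wi ((-a z) • (T * Wi z)) z := by
    intro z
    exact (hasDerivAt_exp_smul_const' (𝕂 := ℝ) T (-α z)).scomp z (hα z).neg
  have hWic : Continuous Wi := exp_continuous.comp ((hαc.neg).smul continuous_const)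
  set d : ℝ → E := fun z => u z - v z with hd_def
  set w : ℝ → E := fun z => Wi z (d z) with hw_def
  have hwc : ContinuousOn w (Icc 0 1) :=
    hWic.continuousOn.clm_apply (hu.sub hv)
  have hwd : ∀ z ∈ Ioo (0:ℝ) 1, HasDerivAt w 0 z := by
    intro z hz
    have hdd : HasDerivAt d (a z • T (d z)) z := by
      have := (hud z hz).sub (hvd z hz)
      show HasDerivAt (u - v) (a z • T (d z)) z
      simpa [hd_def, smul_sub, map_sub] using this
    have h1 := (hWid z).clm_apply hdd
    have h2 : ((-a z) • (T * Wi z)) (d z) + (Wi z) (a z • T (d z)) = 0 := by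
      have hcomm : Wi z * T = T * Wi z := by
        have : Commute (-α z • T) T := ((Commute.refl T).smul_left _)
        exact (this.exp_left)
      have e1 : ((-a z) • (T * Wi z)) (d z) = -(a z • T (Wi z (d z))) := by
        rw [ContinuousLinearMap.smul_apply, ContinuousLinearMap.mul_apply, neg_smul]
      have e2 : (Wi z) (a z • T (d z)) = a z • ((Wi z * T) (d z)) := by
        rw [_root_.map_smul, ContinuousLinearMap.mul_apply]
      rw [e1, e2, hcomm, ContinuousLinearMap.mul_apply, neg_add_cancel]
    rw [h2] at h1
    exact h1
  have hconst := constOn_Icc_of_deriv_zero hwc hwd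
  have hwt₀ : w t₀ = 0 := by
    simp [hw_def, hd_def, h0]
  intro z hz
  have hwz : w z = 0 := by rw [hconst z hz t₀ ht₀, hwt₀]
  have : (exp (α z • T)) (w z) = d z := by
    rw [hw_def]
    have : (exp (α z • T)) ((Wi z) (d z)) = ((exp (α z • T)) * Wi z) (d z) := rfl
    rw [this, hWi_def]
    show (exp (α z • T) * exp ((-α z) • T)) (d z) = d z
    rw [neg_smul, ← NormedSpace.exp_add_of_commute (Commute.refl (α z • T)).neg_right, add_neg_cancel,
      exp_zero, ContinuousLinearMap.one_apply]
  rw [hwz, map_zero] at this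
  have := this.symm
  rwa [hd_def, sub_eq_zero] at this

section
lemma constOn_Icc_of_deriv_zero' : True := trivial
end


/-- charpoly of a block diagonal matrix is the product of charpolys. -/
lemma charpoly_blockDiagonal {R : Type*} [CommRing R] {n o : Type*} [Fintype n] [DecidableEq n]
    [Fintype o] [DecidableEq o] (M : o → Matrix n n R) :
    (Matrix.blockDiagonal M).charpoly = ∏ k : o, (M k).charpoly := by
  simp only [Matrix.charpoly]
  rw [← Matrix.det_blockDiagonal]
  congr 1
  apply Matrix.ext
  rintro ⟨i, k⟩ ⟨j, l⟩
  by_cases hkl : k = l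
  · subst hkl
    by_cases hij : i = j
    · subst hij
      rw [charmatrix_apply_eq, Matrix.blockDiagonal_apply_eq, Matrix.blockDiagonal_apply_eq,
        charmatrix_apply_eq]
    · have hne : ((i, k) : n × o) ≠ (j, k) := by simp [hij]
      rw [charmatrix_apply_ne _ _ _ hne, Matrix.blockDiagonal_apply_eq,
        Matrix.blockDiagonal_apply_eq, charmatrix_apply_ne _ _ _ hij]
  · have hne : ((i, k) : n × o) ≠ (j, l) := by simp [hkl]
    rw [charmatrix_apply_ne _ _ _ hne, Matrix.blockDiagonal_apply_ne _ _ _ hkl,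
      Matrix.blockDiagonal_apply_ne _ _ _ hkl]
    simp

/-- Every root of the charpoly of `1 ⊗ₖ S` (complexified) is a root of the charpoly of `S`. -/
lemma root_charpoly_one_kronecker {nb nv : ℕ}
    (S : Matrix (Fin nv) (Fin nv) ℝ) (μ : ℂ)
    (h : ((((1 : Matrix (Fin nb) (Fin nb) ℝ) ⊗ₖ S).map Complex.ofReal).charpoly).IsRoot μ) :
    ((S.map Complex.ofReal).charpoly).IsRoot μ := by
  set Sc := S.map Complex.ofReal with hSc
  have hre : ((1 : Matrix (Fin nb) (Fin nb) ℝ) ⊗ₖ S).map Complex.ofReal =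
      Matrix.reindex (Equiv.prodComm (Fin nv) (Fin nb)) (Equiv.prodComm (Fin nv) (Fin nb))
        (Matrix.blockDiagonal fun _ : Fin nb => Sc) := by
    ext ⟨i, k⟩ ⟨j, l⟩
    simp only [Matrix.map_apply, Matrix.kroneckerMap_apply, Matrix.reindex_apply,
      Matrix.submatrix_apply, Equiv.prodComm_symm, Equiv.prodComm_apply, Prod.swap_prod_mk,
      Matrix.blockDiagonal_apply, Matrix.one_apply, hSc]
    by_cases hij : i = j <;> simp [hij]
  rw [hre, Matrix.charpoly_reindex, charpoly_blockDiagonal] at h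
  simp only [IsRoot, eval_prod, Finset.prod_eq_zero_iff] at h
  obtain ⟨k, -, hk⟩ := h
  exact hk

lemma charpoly_eval_eq_det {l : Type*} [Fintype l] [DecidableEq l]
    (B : Matrix l l ℂ) (r : ℂ) :
    B.charpoly.eval r = (Matrix.diagonal (fun _ => r) - B).det := by
  rw [Matrix.charpoly, ← Polynomial.coe_evalRingHom, RingHom.map_det]
  congr 1
  ext i j
  by_cases hij : i = j
  · subst hij
    simp [charmatrix_apply_eq]
  · simp [charmatrix_apply_ne _ _ _ hij, Matrix.diagonal_apply_ne _ hij]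

/-- Sylvester: if the charpolys of the complexifications share no root, `A * P - P * B = C`
has a unique solution. -/
lemma sylvester_existsUnique {m l : Type*} [Fintype m] [DecidableEq m] [Fintype l] [DecidableEq l]
    (A : Matrix m m ℝ) (B : Matrix l l ℝ)
    (hdisj : ∀ μ : ℂ, ((A.map Complex.ofReal).charpoly).IsRoot μ →
      ¬ ((B.map Complex.ofReal).charpoly).IsRoot μ)
    (C : Matrix m l ℝ) : ∃! P : Matrix m l ℝ, A * P - P * B = C := by
  set L : Matrix m l ℝ →ₗ[ℝ] Matrix m l ℝ :=
    { toFun := fun P => A * P - P * B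
      map_add' := by intro P Q; simp [Matrix.mul_add, Matrix.add_mul]; abel
      map_smul' := by intro r P; simp [Matrix.mul_smul, Matrix.smul_mul, smul_sub] } with hL
  have hinj : Function.Injective L := by
    rw [← LinearMap.ker_eq_bot, LinearMap.ker_eq_bot']
    intro P hP
    simp only [hL, LinearMap.coe_mk, AddHom.coe_mk, sub_eq_zero] at hP
    -- complexify
    set Ac := A.map Complex.ofReal
    set Bc := B.map Complex.ofReal
    set Pc := P.map Complex.ofReal with hPc
    have hPc0 : Ac * Pc = Pc * Bc := by
      show A.map Complex.ofReal * P.map Complex.ofReal = P.map Complex.ofReal * B.map Complex.ofReal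
      rw [show (Complex.ofReal : ℝ → ℂ) = ⇑Complex.ofRealHom from rfl,
        ← Matrix.map_mul, ← Matrix.map_mul, hP]
    -- powers
    have hpow : ∀ k : ℕ, Ac ^ k * Pc = Pc * Bc ^ k := by
      intro k
      induction k with
      | zero => simp
      | succ k ih =>
        rw [pow_succ, pow_succ, Matrix.mul_assoc, hPc0, ← Matrix.mul_assoc, ih,
          Matrix.mul_assoc]
    have haeval : ∀ p : ℂ[X], (Polynomial.aeval Ac p) * Pc = Pc * (Polynomial.aeval Bc p) := by
      intro p
      induction p using Polynomial.induction_on' with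
      | add p q hp hq => rw [map_add, map_add, Matrix.add_mul, Matrix.mul_add, hp, hq]
      | monomial k c =>
        simp only [Polynomial.aeval_monomial, Matrix.algebraMap_eq_diagonal]
        have hdm : Matrix.diagonal ((algebraMap ℂ (m → ℂ)) c) =
            Matrix.diagonal (fun _ : m => c) := by
          congr 1
        have hdl : Matrix.diagonal ((algebraMap ℂ (l → ℂ)) c) =
            Matrix.diagonal (fun _ : l => c) := by
          congr 1
        rw [hdm, hdl, ← Matrix.smul_eq_diagonal_mul, ← Matrix.smul_eq_diagonal_mul,
          Matrix.smul_mul, hpow k, Matrix.mul_smul]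
    have hCH := haeval Ac.charpoly
    rw [Matrix.aeval_self_charpoly, Matrix.zero_mul] at hCH
    -- show aeval Bc Ac.charpoly is invertible
    have hunit : IsUnit (Polynomial.aeval Bc Ac.charpoly) := by
      have hsplit : Ac.charpoly.Splits := IsAlgClosed.splits _
      have hmonic : Ac.charpoly.Monic := Matrix.charpoly_monic Ac
      have key : ∀ s : Multiset ℂ, (∀ r ∈ s, ¬ (Bc.charpoly).IsRoot r) →
          IsUnit (Polynomial.aeval Bc ((s.map fun r => X - Polynomial.C r).prod)) := by
        intro s
        induction s using Multiset.induction_on with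
        | empty => intro _; simp
        | cons a s ih =>
          intro hs
          rw [Multiset.map_cons, Multiset.prod_cons, _root_.map_mul]
          refine IsUnit.mul ?_ (ih fun r hr => hs r (Multiset.mem_cons_of_mem hr))
          have hrB : ¬ (Bc.charpoly).IsRoot a := hs a (Multiset.mem_cons_self a s)
          rw [Matrix.isUnit_iff_isUnit_det, isUnit_iff_ne_zero]
          simp only [map_sub, Polynomial.aeval_X, Polynomial.aeval_C]
          intro hdet0
          apply hrB
          rw [IsRoot, charpoly_eval_eq_det]
          have heq : Matrix.diagonal (fun _ : l => a) - Bc =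
              -(Bc - algebraMap ℂ (Matrix l l ℂ) a) := by
            rw [neg_sub, Matrix.algebraMap_eq_diagonal]
            rfl
          rw [heq, Matrix.det_neg, hdet0, mul_zero]
      have := key Ac.charpoly.roots (fun r hr => by
        apply hdisj r
        exact (Polynomial.mem_roots hmonic.ne_zero).mp hr)
      rwa [← hsplit.eq_prod_roots_of_monic hmonic] at this
    -- conclude Pc = 0
    have hPczero : Pc = 0 := by
      have hu1 : (Polynomial.aeval Bc Ac.charpoly) * (↑hunit.unit⁻¹ : Matrix l l ℂ) = 1 := by
        have h := Units.mul_inv hunit.unit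
        rwa [IsUnit.unit_spec] at h
      have h2 : Pc * ((Polynomial.aeval Bc Ac.charpoly) * (↑hunit.unit⁻¹ : Matrix l l ℂ))
          = Pc := by rw [hu1, Matrix.mul_one]
      rw [← Matrix.mul_assoc, ← hCH, Matrix.zero_mul] at h2
      exact h2.symm
    -- conclude P = 0
    ext i j
    have := congrArg (fun M => M i j) hPczero
    simpa [hPc, Complex.ofReal_eq_zero] using this
  have hsurj : Function.Surjective L := by
    have := LinearMap.injective_iff_surjective (f := L)
    exact this.mp hinj
  obtain ⟨P, hP⟩ := hsurj C
  refine ⟨P, hP, fun Q hQ => hinj ?_⟩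
  have hQ' : A * Q - Q * B = C := hQ
  show L Q = L P
  rw [hP]
  exact hQ'


section Family

variable {E : Type*} [NormedAddCommGroup E] [NormedSpace ℝ E] [CompleteSpace E]

lemma family_existsUnique (nm np : ℕ) (T : E →L[ℝ] E)
    (a : Fin (nm+np) → ℝ → ℝ) (ha : ∀ j, Continuous (a j))
    (g : Fin (nm+np) → ℝ → E) (hg : ∀ j, Continuous (g j))
    (negInit : Fin (nm+np) → E)
    (posVal : (Fin (nm+np) → ℝ → E) → Fin nm → E)
    (hlocal : ∀ f f' (j : Fin nm),
      (∀ m : Fin (nm+np), (j:ℕ) < (m:ℕ) → ∀ z ∈ Icc (0:ℝ) 1, f m z = f' m z) →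
      posVal f j = posVal f' j) :
    ∃ f : Fin (nm+np) → ℝ → E,
      (∀ j, ContDiff ℝ 1 (f j)) ∧
      (∀ j, ∀ z, HasDerivAt (f j) (a j z • T (f j z) + g j z) z) ∧
      (∀ j : Fin (nm+np), nm ≤ (j:ℕ) → f j 1 = negInit j) ∧
      (∀ (j : Fin (nm+np)) (hj : (j:ℕ) < nm), f j 0 = posVal f ⟨(j:ℕ), hj⟩) ∧
      (∀ f' : Fin (nm+np) → ℝ → E,
        (∀ j, ContinuousOn (f' j) (Icc 0 1)) →
        (∀ j, ∀ z ∈ Ioo (0:ℝ) 1, HasDerivAt (f' j) (a j z • T (f' j z) + g j z) z) →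
        (∀ j : Fin (nm+np), nm ≤ (j:ℕ) → f' j 1 = negInit j) →
        (∀ (j : Fin (nm+np)) (hj : (j:ℕ) < nm), f' j 0 = posVal f' ⟨(j:ℕ), hj⟩) →
        ∀ j, ∀ z ∈ Icc (0:ℝ) 1, f' j z = f j z) := by
  -- `Good f` : regularity and ODE; `BCs b f` : boundary conditions for indices `≥ b`.
  set Good : (Fin (nm+np) → ℝ → E) → Prop := fun f =>
    (∀ j, ContDiff ℝ 1 (f j)) ∧
    (∀ j, ∀ z, HasDerivAt (f j) (a j z • T (f j z) + g j z) z) with hGood_def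
  set Weak : (Fin (nm+np) → ℝ → E) → Prop := fun f =>
    (∀ j, ContinuousOn (f j) (Icc 0 1)) ∧
    (∀ j, ∀ z ∈ Ioo (0:ℝ) 1, HasDerivAt (f j) (a j z • T (f j z) + g j z) z) with hWeak_def
  set BCs : ℕ → (Fin (nm+np) → ℝ → E) → Prop := fun b f =>
    (∀ j : Fin (nm+np), nm ≤ (j:ℕ) → f j 1 = negInit j) ∧
    (∀ (j : Fin (nm+np)) (hj : (j:ℕ) < nm), b ≤ (j:ℕ) → f j 0 = posVal f ⟨(j:ℕ), hj⟩)
    with hBCs_def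
  have hWeakOfGood : ∀ f, Good f → Weak f := by
    rintro f ⟨h1, h2⟩
    exact ⟨fun j => (h1 j).continuous.continuousOn, fun j z _ => h2 j z⟩
  -- main induction
  have main : ∀ c : ℕ, ∃ f, Good f ∧ BCs (nm - c) f ∧
      (∀ f', Weak f' → BCs (nm - c) f' →
        ∀ j : Fin (nm+np), nm - c ≤ (j:ℕ) → ∀ z ∈ Icc (0:ℝ) 1, f' j z = f j z) := by
    intro c
    induction c with
    | zero =>
      have hex : ∀ j : Fin (nm+np), ∃ y : ℝ → E, ContDiff ℝ 1 y ∧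
          (∀ z, HasDerivAt y (a j z • T (y z) + g j z) z) ∧
          (nm ≤ (j:ℕ) → y 1 = negInit j) := by
        intro j
        by_cases h : nm ≤ (j:ℕ)
        · obtain ⟨y, h1, h2, h3⟩ := ode_exists T (ha j) (hg j) 1 (negInit j)
          exact ⟨y, h1, h3, fun _ => h2⟩
        · obtain ⟨y, h1, h2, h3⟩ := ode_exists T (ha j) (hg j) 0 0
          exact ⟨y, h1, h3, fun hh => absurd hh h⟩
      choose f hf1 hf2 hf3 using hex
      refine ⟨f, ⟨hf1, hf2⟩, ⟨fun j hj => hf3 j hj, fun j hj hb => by omega⟩, ?_⟩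
      rintro f' ⟨hf'c, hf'd⟩ ⟨hf'neg, -⟩ j hj z hz
      simp only [Nat.sub_zero] at hj
      exact ode_unique T (ha j) (right_mem_Icc.2 zero_le_one) (hf'c j)
        (hf1 j).continuous.continuousOn (hf'd j) (fun z hz => hf2 j z)
        (by rw [hf'neg j hj, hf3 j hj]) z hz
    | succ c ih =>
      obtain ⟨f, hGood, hBC, huniq⟩ := ih
      by_cases hc : nm ≤ c
      · have h0 : nm - (c+1) = nm - c := by omega
        rw [h0]
        exact ⟨f, hGood, hBC, huniq⟩
      · push_neg at hc
        set b : ℕ := nm - c - 1 with hb_def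
        have hsub : nm - (c+1) = b := by omega
        have hb : b < nm := by omega
        have hb1 : b + 1 = nm - c := by omega
        set j₀ : Fin (nm+np) := ⟨b, by omega⟩ with hj₀_def
        obtain ⟨y, hy1, hy2, hy3⟩ := ode_exists T (ha j₀) (hg j₀) 0 (posVal f ⟨b, hb⟩)
        set fnew := Function.update f j₀ y with hfnew_def
        have hfnew_ne : ∀ j : Fin (nm+np), (j:ℕ) ≠ b → fnew j = f j := by
          intro j hj
          apply Function.update_of_ne _ _ _
          intro h; apply hj; rw [h]
        have hfnew_j₀ : fnew j₀ = y := Function.update_self _ _ _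
        have hposeq : ∀ jj : Fin nm, b ≤ (jj : ℕ) → posVal fnew jj = posVal f jj := by
          intro jj hjj
          apply hlocal
          intro m hm z hz
          rw [hfnew_ne m (by omega)]
        rw [hsub]
        have hGoodnew : Good fnew := by
          constructor
          · intro j
            by_cases h : (j:ℕ) = b
            · have : j = j₀ := Fin.ext h
              rw [this, hfnew_j₀]; exact hy1
            · rw [hfnew_ne j h]; exact hGood.1 j
          · intro j z
            by_cases h : (j:ℕ) = b
            · have hj : j = j₀ := Fin.ext h
              rw [hj, hfnew_j₀]; exact hy3 z
            · rw [hfnew_ne j h]; exact hGood.2 j z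
        refine ⟨fnew, hGoodnew, ⟨?_, ?_⟩, ?_⟩
        · intro j hj
          rw [hfnew_ne j (by omega)]
          exact hBC.1 j hj
        · intro j hj hbj
          by_cases h : (j:ℕ) = b
          · have hjj : j = j₀ := Fin.ext h
            subst hjj
            rw [hfnew_j₀, hy2]
            exact (hposeq ⟨b, hb⟩ (le_refl b)).symm
          · have hge : nm - c ≤ (j:ℕ) := by omega
            rw [hfnew_ne j h, hBC.2 j hj hge,
              hposeq ⟨(j:ℕ), hj⟩ (show b ≤ (j:ℕ) by omega)]
        · intro f' hWeak' hBC' j hj z hz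
          -- f' satisfies BCs (nm - c) as well
          have hBC'w : BCs (nm - c) f' := ⟨hBC'.1, fun jj hjj hbb => hBC'.2 jj hjj (by omega)⟩
          have hupper : ∀ m : Fin (nm+np), nm - c ≤ (m:ℕ) → ∀ w ∈ Icc (0:ℝ) 1,
              f' m w = fnew m w := by
            intro m hm w hw
            rw [hfnew_ne m (by omega)]
            exact huniq f' hWeak' hBC'w m hm w hw
          by_cases h : (j:ℕ) = b
          · have hjj : j = j₀ := Fin.ext h
            subst hjj
            have hval : f' j₀ 0 = fnew j₀ 0 := by
              rw [hfnew_j₀, hy2]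
              have h1 := hBC'.2 j₀ (by omega : (j₀:ℕ) < nm) (by omega)
              rw [h1]
              have h2 : posVal f' ⟨(j₀:ℕ), by omega⟩ = posVal fnew ⟨(j₀:ℕ), by omega⟩ := by
                apply hlocal
                intro m hm w hw
                have hm' : b < (m:ℕ) := hm
                exact hupper m (by omega) w hw
              rw [h2, hposeq ⟨(j₀:ℕ), by omega⟩ (show b ≤ b from le_refl b)]
            exact ode_unique T (ha j₀) (left_mem_Icc.2 zero_le_one) (hWeak'.1 j₀)
              ((hGoodnew.1 j₀).continuous.continuousOn) (hWeak'.2 j₀)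
              (fun w hw => hGoodnew.2 j₀ w) hval z hz
          · exact hupper j (by omega) z hz
  obtain ⟨f, hGood, hBC, huniq⟩ := main nm
  have hz : nm - nm = 0 := Nat.sub_self nm
  rw [hz] at hBC huniq
  refine ⟨f, hGood.1, hGood.2, hBC.1, fun j hj => hBC.2 j hj (Nat.zero_le _), ?_⟩
  intro f' h1 h2 h3 h4 j z hz'
  exact huniq f' ⟨h1, h2⟩ ⟨h3, fun jj hjj _ => h4 jj hjj⟩ j (Nat.zero_le _) z hz'


end Family

end Helpers

set_option maxHeartbeats 4000000 in
set_option synthInstance.maxHeartbeats 1000000 in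
/-- the decoupling equations of the multi-agent system have exactly one solution
`(Π_x, Π_w)` with `Π_x` continuously differentiable. -/
theorem decouplingMAS_unique_solution
    (nm np nw nv nb : ℕ) (hnm : 1 ≤ nm) (hnw : 1 ≤ nw) (hnv : 1 ≤ nv) (hnb : 1 ≤ nb)
    (S : Matrix (Fin nv) (Fin nv) ℝ)
    (hS : ∀ μ : ℂ, (S.map Complex.ofReal).charpoly.IsRoot μ → μ.re = 0)
    (by_ : Fin nv → ℝ)
    (St : Matrix (Fin nb × Fin nv) (Fin nb × Fin nv) ℝ)
    (hSt : St = (1 : Matrix (Fin nb) (Fin nb) ℝ) ⊗ₖ S)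
    (By : Matrix (Fin nb × Fin nv) (Fin nb) ℝ)
    (hBy : By = Matrix.of fun ki j => if ki.1 = j then by_ ki.2 else 0)
    (Fw : Matrix (Fin nw) (Fin nw) ℝ) (hFw : IsHurwitzR Fw)
    (Λ : ℝ → Matrix (Fin (nm + np)) (Fin (nm + np)) ℝ)
    (hΛdiag : ∀ z ∈ Icc (0 : ℝ) 1, (Λ z).IsDiag)
    (hΛC1 : ∀ i j, ContDiffOn ℝ 1 (fun z => Λ z i j) (Icc 0 1))
    (hΛsorted : ∀ z ∈ Icc (0 : ℝ) 1, ∀ i j : Fin (nm + np), i ≤ j → Λ z j j ≤ Λ z i i)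
    (hΛsign : ∀ z ∈ Icc (0 : ℝ) 1, ∀ i : Fin (nm + np),
      ((i : ℕ) < nm → 0 < Λ z i i) ∧ (nm ≤ (i : ℕ) → Λ z i i < 0))
    (A₀ : ℝ → Matrix (Fin (nm + np)) (Fin nm) ℝ)
    (hA₀cont : ∀ i j, ContinuousOn (fun z => A₀ z i j) (Icc 0 1))
    (hA₀tri : ∀ z ∈ Icc (0 : ℝ) 1, ∀ i j : Fin nm, i ≤ j → ((Eminus nm np)ᵀ * A₀ z) i j = 0)
    (Q₀ : Matrix (Fin np) (Fin nm) ℝ)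
    (Bw : Matrix (Fin nw) (Fin nm) ℝ)
    (Cw : Matrix (Fin nb) (Fin nw) ℝ)
    (Cx0 Cx1 : Matrix (Fin nb) (Fin (nm + np)) ℝ)
    (Cx : ℝ → Matrix (Fin nb) (Fin (nm + np)) ℝ)
    (hCx : ∀ i j, ContinuousOn (fun z => Cx z i j) (Icc 0 1)) :
    ∃ (Px : ℝ → Matrix (Fin nb × Fin nv) (Fin (nm + np)) ℝ)
      (Pw : Matrix (Fin nb × Fin nv) (Fin nw) ℝ),
      ((∀ i j, ContDiffOn ℝ 1 (fun z => Px z i j) (Icc 0 1)) ∧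
        DecouplingMAS nm np nw nv nb St By Fw Λ A₀ Q₀ Bw Cw Cx0 Cx1 Cx Px Pw) ∧
      ∀ (Px' : ℝ → Matrix (Fin nb × Fin nv) (Fin (nm + np)) ℝ)
        (Pw' : Matrix (Fin nb × Fin nv) (Fin nw) ℝ),
        ((∀ i j, ContDiffOn ℝ 1 (fun z => Px' z i j) (Icc 0 1)) ∧
          DecouplingMAS nm np nw nv nb St By Fw Λ A₀ Q₀ Bw Cw Cx0 Cx1 Cx Px' Pw') →
        (∀ z ∈ Icc (0 : ℝ) 1, Px' z = Px z) ∧ Pw' = Pw := by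
    classical
  have h01 : (0:ℝ) ≤ 1 := zero_le_one
  have hmemI : ∀ z ∈ Ioo (0:ℝ) 1, z ∈ Icc (0:ℝ) 1 := fun z hz => Ioo_subset_Icc_self hz
  -- clamp to [0,1]
  set ρ : ℝ → ℝ := fun z => max 0 (min 1 z) with hρ_def
  have hρc : Continuous ρ := continuous_const.max (continuous_const.min continuous_id)
  have hρmem : ∀ z, ρ z ∈ Icc (0:ℝ) 1 :=
    fun z => ⟨le_max_left _ _, max_le zero_le_one (min_le_left _ _)⟩
  have hρid : ∀ z ∈ Icc (0:ℝ) 1, ρ z = z := by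
    intro z hz
    simp only [hρ_def]
    rw [min_eq_right hz.2, max_eq_right hz.1]
  have hcomp : ∀ u : ℝ → ℝ, ContinuousOn u (Icc 0 1) → Continuous fun z => u (ρ z) :=
    fun u hu => hu.comp_continuous hρc hρmem
  -- nonvanishing of Λ diagonal
  have hlamne : ∀ (j : Fin (nm+np)) w, w ∈ Icc (0:ℝ) 1 → Λ w j j ≠ 0 := by
    intro j w hw
    rcases lt_or_ge (j:ℕ) nm with h | h
    · exact ne_of_gt ((hΛsign w hw j).1 h)
    · exact ne_of_lt ((hΛsign w hw j).2 h)
  set a : Fin (nm+np) → ℝ → ℝ := fun j z => -(Λ (ρ z) j j)⁻¹ with ha_def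
  have hacont : ∀ j, Continuous (a j) := by
    intro j
    exact ((hcomp _ ((hΛC1 j j).continuousOn)).inv₀
      (fun z => hlamne j (ρ z) (hρmem z))).neg
  have hna : ∀ (j : Fin (nm+np)) w, w ∈ Icc (0:ℝ) 1 → -(a j w) = (Λ w j j)⁻¹ := by
    intro j w hw
    simp only [ha_def, neg_neg, hρid w hw]
  -- Sylvester solution Pw
  have hdisj : ∀ μ : ℂ, ((St.map Complex.ofReal).charpoly).IsRoot μ →
      ¬ ((Fw.map Complex.ofReal).charpoly).IsRoot μ := by
    intro μ hμ hμ'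
    have h1 : μ.re = 0 := hS μ (by rw [hSt] at hμ; exact root_charpoly_one_kronecker S μ hμ)
    have h2 : μ.re < 0 := hFw μ hμ'
    linarith
  obtain ⟨Pw, hPw, hPwu⟩ := sylvester_existsUnique St Fw hdisj (-(By * Cw))
  -- the operator and data for the ODE family
  set T : ((Fin nb × Fin nv) → ℝ) →L[ℝ] ((Fin nb × Fin nv) → ℝ) :=
    LinearMap.toContinuousLinearMap (Matrix.mulVecLin St) with hT_def
  have hT : ∀ v, T v = St *ᵥ v := by
    intro v
    simp only [hT_def, LinearMap.coe_toContinuousLinearMap', Matrix.mulVecLin_apply]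
  set g : Fin (nm+np) → ℝ → ((Fin nb × Fin nv) → ℝ) :=
    fun j z i => -((By * Cx (ρ z)) i j) with hg_def
  have hgc : ∀ j, Continuous (g j) := by
    intro j
    apply continuous_pi
    intro i
    have : Continuous fun z => (By * Cx (ρ z)) i j := by
      simp only [Matrix.mul_apply]
      apply continuous_finset_sum
      intro k _
      exact continuous_const.mul (hcomp _ (hCx k j))
    exact this.neg
  set negInit : Fin (nm+np) → ((Fin nb × Fin nv) → ℝ) := fun j i => (By * Cx1) i j
    with hnegInit_def
  set Rm : Matrix (Fin nb × Fin nv) (Fin nm) ℝ :=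
    Pw * Bw - By * Cx0 * (Eplus nm np * Q₀ + Eminus nm np) with hRm_def
  set emb : Fin np → Fin (nm+np) := fun k => ⟨nm + (k:ℕ), by omega⟩ with hemb_def
  set coefA : Fin nm → Fin (nm+np) → ℝ → ℝ :=
    fun jm m ζ => if (jm:ℕ) < (m:ℕ) then (-(a m ζ)) * A₀ (ρ ζ) m jm else 0 with hcoefA_def
  have hcoefAc : ∀ jm m, Continuous (coefA jm m) := by
    intro jm m
    by_cases h : (jm:ℕ) < (m:ℕ)
    · simp only [hcoefA_def, if_pos h]
      exact ((hacont m).neg).mul (hcomp _ (hA₀cont m jm))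
    · simp only [hcoefA_def, if_neg h]
      exact continuous_const
  set posVal : (Fin (nm+np) → ℝ → ((Fin nb × Fin nv) → ℝ)) → Fin nm →
      ((Fin nb × Fin nv) → ℝ) := fun f jm =>
    (fun i => Rm i jm) + (∫ ζ in (0:ℝ)..1, ∑ m, coefA jm m ζ • f m ζ)
      - ∑ k : Fin np, Q₀ k jm • f (emb k) 0 with hposVal_def
  have hlocal : ∀ f f' (jm : Fin nm),
      (∀ m : Fin (nm+np), (jm:ℕ) < (m:ℕ) → ∀ z ∈ Icc (0:ℝ) 1, f m z = f' m z) →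
      posVal f jm = posVal f' jm := by
    intro f f' jm hff
    simp only [hposVal_def]
    congr 1
    · congr 1
      apply intervalIntegral.integral_congr
      intro ζ hζ
      rw [uIcc_of_le h01] at hζ
      apply Finset.sum_congr rfl
      intro m _
      by_cases h : (jm:ℕ) < (m:ℕ)
      · rw [hff m h ζ hζ]
      · simp only [hcoefA_def, if_neg h, zero_smul]
    · apply Finset.sum_congr rfl
      intro k _
      rw [hff (emb k) (by simp only [hemb_def]; omega) 0 (left_mem_Icc.2 h01)]
  obtain ⟨f, hfC1, hfODE, hfneg, hfpos, hfuniq⟩ :=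
    family_existsUnique nm np T a hacont g hgc negInit posVal hlocal
  -- the candidate Px
  set Px : ℝ → Matrix (Fin nb × Fin nv) (Fin (nm+np)) ℝ :=
    fun z => Matrix.of fun i j => (-(a j z)) * f j z i with hPx_def
  -- generic diagonal multiplication
  have hdiagmul : ∀ (M : Matrix (Fin nb × Fin nv) (Fin (nm+np)) ℝ) w, w ∈ Icc (0:ℝ) 1 →
      ∀ i j, (M * Λ w) i j = M i j * Λ w j j := by
    intro M w hw i j
    rw [Matrix.mul_apply]
    apply Finset.sum_eq_single j
    · intro k _ hk
      rw [hΛdiag w hw hk, mul_zero]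
    · intro h; exact absurd (Finset.mem_univ j) h
  have hPxΛ : ∀ w ∈ Icc (0:ℝ) 1, ∀ i j, (Px w * Λ w) i j = f j w i := by
    intro w hw i j
    rw [hdiagmul (Px w) w hw i j]
    show ((-(a j w)) * f j w i) * Λ w j j = f j w i
    rw [hna j w hw]
    field_simp [hlamne j w hw]
  -- sum against Eplus columns
  have hsumE : ∀ (v : Fin (nm+np) → ℝ) (k : Fin np),
      (∑ m, v m * Eplus nm np m k) = v (emb k) := by
    intro v k
    rw [Finset.sum_eq_single (emb k)]
    · simp [Eplus, hemb_def]
    · intro m _ hm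
      have hne : (m:ℕ) ≠ nm + (k:ℕ) := by
        intro hh; exact hm (Fin.ext (by simp [hemb_def, hh]))
      simp [Eplus, hne]
    · intro h; exact absurd (Finset.mem_univ _) h
  have hsumEm : ∀ (v : Fin (nm+np) → ℝ) (jm : Fin nm),
      (∑ m, v m * Eminus nm np m jm) = v ⟨(jm:ℕ), by omega⟩ := by
    intro v jm
    rw [Finset.sum_eq_single (⟨(jm:ℕ), by omega⟩ : Fin (nm+np))]
    · simp [Eminus]
    · intro m _ hm
      have hne : (m:ℕ) ≠ (jm:ℕ) := by
        intro hh; exact hm (Fin.ext (by simpa using hh))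
      simp [Eminus, hne]
    · intro h; exact absurd (Finset.mem_univ _) h
  have hsumEQ : ∀ (v : Fin (nm+np) → ℝ) (jm : Fin nm),
      (∑ m, v m * (Eplus nm np * Q₀) m jm) = ∑ k : Fin np, v (emb k) * Q₀ k jm := by
    intro v jm
    simp only [Matrix.mul_apply, Finset.mul_sum]
    rw [Finset.sum_comm]
    apply Finset.sum_congr rfl
    intro k _
    calc ∑ x, v x * (Eplus nm np x k * Q₀ k jm)
        = (∑ x, v x * Eplus nm np x k) * Q₀ k jm := by
          rw [Finset.sum_mul]
          apply Finset.sum_congr rfl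
          intro x _
          ring
      _ = v (emb k) * Q₀ k jm := by rw [hsumE v k]
  -- strict triangularity of A₀ in usable form
  have hA₀z : ∀ w ∈ Icc (0:ℝ) 1, ∀ (m : Fin (nm+np)) (jm : Fin nm),
      (m:ℕ) ≤ (jm:ℕ) → A₀ w m jm = 0 := by
    intro w hw m jm hmj
    have hmnm : (m:ℕ) < nm := lt_of_le_of_lt hmj jm.2
    have h1 := hA₀tri w hw ⟨(m:ℕ), hmnm⟩ jm hmj
    rw [Matrix.mul_apply] at h1
    rw [Finset.sum_eq_single m] at h1
    · simpa [Eminus, Matrix.transpose_apply] using h1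
    · intro b _ hb
      have hne : (b:ℕ) ≠ (m:ℕ) := fun hh => hb (Fin.ext hh)
      simp [Eminus, Matrix.transpose_apply, hne]
    · intro h; exact absurd (Finset.mem_univ _) h
  -- the key computational identity for condition (iii), for any pair (Pxa, fa)
  have key3 : ∀ (Pxa : ℝ → Matrix (Fin nb × Fin nv) (Fin (nm+np)) ℝ)
      (fa : Fin (nm+np) → ℝ → ((Fin nb × Fin nv) → ℝ)),
      (∀ j, ContinuousOn (fa j) (Icc 0 1)) →
      (∀ w ∈ Icc (0:ℝ) 1, ∀ i j, (Pxa w * Λ w) i j = fa j w i) →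
      ∀ (i : Fin nb × Fin nv) (jm : Fin nm),
      (Pxa 0 * Λ 0 * (Eplus nm np * Q₀ + Eminus nm np)) i jm
          - (∫ ζ in (0:ℝ)..1, (Pxa ζ * A₀ ζ) i jm)
        = fa ⟨(jm:ℕ), by omega⟩ 0 i - posVal fa jm i + Rm i jm := by
    intro Pxa fa hfc hrel i jm
    have h0mem : (0:ℝ) ∈ Icc (0:ℝ) 1 := left_mem_Icc.2 h01
    -- entries of Pxa in terms of fa
    have hPe : ∀ w ∈ Icc (0:ℝ) 1, ∀ i' (m : Fin (nm+np)),
        Pxa w i' m = (-(a m w)) * fa m w i' := by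
      intro w hw i' m
      have h1 := hrel w hw i' m
      rw [hdiagmul (Pxa w) w hw i' m] at h1
      have hne := hlamne m w hw
      rw [hna m w hw]
      field_simp
      rw [mul_comm] at h1
      rw [← h1]
      ring
    -- first term
    have hterm1 : (Pxa 0 * Λ 0 * (Eplus nm np * Q₀ + Eminus nm np)) i jm
        = (∑ k : Fin np, fa (emb k) 0 i * Q₀ k jm) + fa ⟨(jm:ℕ), by omega⟩ 0 i := by
      rw [Matrix.mul_apply]
      have : ∀ m, (Pxa 0 * Λ 0) i m * (Eplus nm np * Q₀ + Eminus nm np) m jm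
          = fa m 0 i * (Eplus nm np * Q₀) m jm + fa m 0 i * Eminus nm np m jm := by
        intro m
        rw [hrel 0 h0mem i m, Matrix.add_apply, mul_add]
      rw [Finset.sum_congr rfl (fun m _ => this m), Finset.sum_add_distrib,
        hsumEQ (fun m => fa m 0 i) jm, hsumEm (fun m => fa m 0 i) jm]
    -- integrand identity
    have hintg : ∀ ζ ∈ Icc (0:ℝ) 1,
        (Pxa ζ * A₀ ζ) i jm = (∑ m, coefA jm m ζ • fa m ζ) i := by
      intro ζ hζ
      rw [Matrix.mul_apply, Finset.sum_apply]
      apply Finset.sum_congr rfl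
      intro m _
      rw [hPe ζ hζ i m]
      by_cases h : (jm:ℕ) < (m:ℕ)
      · simp only [hcoefA_def, if_pos h, Pi.smul_apply, smul_eq_mul, hρid ζ hζ]
        ring
      · push_neg at h
        rw [hA₀z ζ hζ m jm h]
        simp only [hcoefA_def, if_neg (not_lt.2 h), zero_smul, Pi.zero_apply, mul_zero]
    -- integrability of the vector-valued integrand
    have hintgc : ContinuousOn (fun ζ => ∑ m, coefA jm m ζ • fa m ζ)
        (Icc (0:ℝ) 1) := by
      apply continuousOn_finset_sum
      intro m _
      exact ContinuousOn.smul ((hcoefAc jm m).continuousOn) (hfc m)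
    have hii : IntervalIntegrable (fun ζ => ∑ m, coefA jm m ζ • fa m ζ)
        MeasureTheory.volume 0 1 := by
      apply ContinuousOn.intervalIntegrable
      rwa [uIcc_of_le h01]
    -- pull the coordinate out of the integral
    have hswap : (∫ ζ in (0:ℝ)..1, (Pxa ζ * A₀ ζ) i jm)
        = (∫ ζ in (0:ℝ)..1, ∑ m, coefA jm m ζ • fa m ζ) i := by
      have h1 : (∫ ζ in (0:ℝ)..1, (Pxa ζ * A₀ ζ) i jm)
          = ∫ ζ in (0:ℝ)..1, (ContinuousLinearMap.proj (R := ℝ)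
              (φ := fun _ : Fin nb × Fin nv => ℝ) i) (∑ m, coefA jm m ζ • fa m ζ) := by
        apply intervalIntegral.integral_congr
        intro ζ hζ
        rw [uIcc_of_le h01] at hζ
        exact hintg ζ hζ
      rw [h1, ContinuousLinearMap.intervalIntegral_comp_comm _ hii]
      rfl
    rw [hterm1, hswap]
    simp only [hposVal_def, Pi.add_apply, Pi.sub_apply, Finset.sum_apply, Pi.smul_apply,
      smul_eq_mul]
    have hcomm : (∑ k : Fin np, Q₀ k jm * fa (emb k) 0 i)
        = ∑ k : Fin np, fa (emb k) 0 i * Q₀ k jm :=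
      Finset.sum_congr rfl (fun k _ => mul_comm _ _)
    rw [hcomm]
    ring
  -- continuity of f columns on Icc
  have hfcont : ∀ j, ContinuousOn (f j) (Icc (0:ℝ) 1) :=
    fun j => (hfC1 j).continuous.continuousOn
  -- Assemble existence statement
  refine ⟨Px, Pw, ⟨?_, ?_, ?_, ?_, ?_⟩, ?_⟩
  · -- C¹ regularity of Px entries
    intro i j
    have h1 : ContDiffOn ℝ 1 (fun z => (Λ z j j)⁻¹ * f j z i) (Icc 0 1) := by
      apply ContDiffOn.mul
      · exact ContDiffOn.inv (hΛC1 j j) (fun w hw => hlamne j w hw)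
      · exact ((ContinuousLinearMap.proj (R := ℝ)
          (φ := fun _ : Fin nb × Fin nv => ℝ) i).contDiff.comp (hfC1 j)).contDiffOn
    apply h1.congr
    intro z hz
    show (-(a j z)) * f j z i = (Λ z j j)⁻¹ * f j z i
    rw [hna j z hz]
  · exact hPw
  · -- condition (ii)
    intro z hz
    have hzI : z ∈ Icc (0:ℝ) 1 := hmemI z hz
    ext i j
    simp only [Matrix.add_apply, Matrix.of_apply, Matrix.neg_apply]
    have hEq : EqOn (fun t => (Px t * Λ t) i j) (fun t => f j t i) (Icc 0 1) :=
      fun t ht => hPxΛ t ht i j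
    rw [derivWithin_congr hEq (hPxΛ z hzI i j)]
    have hDA : HasDerivAt (fun t => f j t i) ((a j z • T (f j z) + g j z) i) z := by
      have h1 := hfODE j z
      exact ((ContinuousLinearMap.proj (R := ℝ)
        (φ := fun _ : Fin nb × Fin nv => ℝ) i).hasFDerivAt).comp_hasDerivAt z h1
    have hDW : derivWithin (fun t => f j t i) (Icc 0 1) z
        = (a j z • T (f j z) + g j z) i :=
      (hDA.hasDerivWithinAt).derivWithin (uniqueDiffOn_Icc_zero_one z hzI)
    rw [hDW]
    have hSte : (St * Px z) i j = (-(a j z)) * (T (f j z)) i := by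
      rw [Matrix.mul_apply, hT]
      simp only [hPx_def, Matrix.of_apply, Matrix.mulVec, dotProduct, Finset.mul_sum]
      apply Finset.sum_congr rfl
      intro k _
      ring
    rw [hSte]
    simp only [Pi.add_apply, Pi.smul_apply, smul_eq_mul, hg_def, hρid z hzI]
    ring
  · -- condition (iii)
    ext i jm
    have hk := key3 Px f hfcont hPxΛ i jm
    simp only [Matrix.sub_apply, Matrix.of_apply]
    rw [hk]
    have hp := hfpos ⟨(jm:ℕ), by omega⟩ (by simpa using jm.2)
    have : f (⟨(jm:ℕ), by omega⟩ : Fin (nm+np)) 0 i = posVal f jm i := by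
      rw [hp]
    rw [this]
    simp only [sub_self, zero_add, hRm_def, Matrix.sub_apply]
  · -- condition (iv)
    ext i k
    have h1mem : (1:ℝ) ∈ Icc (0:ℝ) 1 := right_mem_Icc.2 h01
    rw [Matrix.mul_apply, Matrix.mul_apply]
    rw [hsumE (fun m => (Px 1 * Λ 1) i m) k, hsumE (fun m => (By * Cx1) i m) k]
    rw [hPxΛ 1 h1mem i (emb k)]
    have := hfneg (emb k) (by simp only [hemb_def]; omega)
    rw [this]
  · -- uniqueness
    rintro Px' Pw' ⟨hPx'C1, hD1, hD2, hD3, hD4⟩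
    have hPw'eq : Pw' = Pw := hPwu Pw' hD1
    -- the transformed columns of Px'
    set f' : Fin (nm+np) → ℝ → ((Fin nb × Fin nv) → ℝ) :=
      fun j z i => Px' (ρ z) i j * Λ (ρ z) j j with hf'_def
    have hf'c : ∀ j, ContinuousOn (f' j) (Icc (0:ℝ) 1) := by
      intro j
      apply Continuous.continuousOn
      apply continuous_pi
      intro i
      exact (hcomp _ ((hPx'C1 i j).continuousOn)).mul (hcomp _ ((hΛC1 j j).continuousOn))
    have hrel' : ∀ w ∈ Icc (0:ℝ) 1, ∀ i j, (Px' w * Λ w) i j = f' j w i := by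
      intro w hw i j
      rw [hdiagmul (Px' w) w hw i j]
      simp only [hf'_def, hρid w hw]
    -- ODE for f'
    have hf'ode : ∀ j, ∀ z ∈ Ioo (0:ℝ) 1, HasDerivAt (f' j)
        (a j z • T (f' j z) + g j z) z := by
      intro j z hz
      have hzI : z ∈ Icc (0:ℝ) 1 := hmemI z hz
      have hIccnhds : Icc (0:ℝ) 1 ∈ 𝓝 z := Icc_mem_nhds hz.1 hz.2
      rw [hasDerivAt_pi]
      intro i
      -- the function u t = (Px' t * Λ t) i j
      have hudiff : DifferentiableAt ℝ (fun t => (Px' t * Λ t) i j) z := by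
        have : (fun t => (Px' t * Λ t) i j)
            = fun t => ∑ k, Px' t i k * Λ t k j := by
          funext t; rw [Matrix.mul_apply]
        rw [this]
        apply DifferentiableAt.fun_sum
        intro k _
        exact (((hPx'C1 i k).differentiableOn one_ne_zero).differentiableAt hIccnhds).mul
          (((hΛC1 k j).differentiableOn one_ne_zero).differentiableAt hIccnhds)
      have hent := congrArg (fun M => M i j) (hD2 z hz)
      simp only [Matrix.add_apply, Matrix.of_apply, Matrix.neg_apply] at hent
      have hder : deriv (fun t => (Px' t * Λ t) i j) z
          = -((By * Cx z) i j) - (St * Px' z) i j := by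
        rw [← derivWithin_of_mem_nhds hIccnhds]
        linarith [hent]
      have hu : HasDerivAt (fun t => (Px' t * Λ t) i j)
          (-((By * Cx z) i j) - (St * Px' z) i j) z := by
        rw [← hder]
        exact hudiff.hasDerivAt
      -- transfer to f' j · i
      have hev : (fun t => f' j t i) =ᶠ[𝓝 z] (fun t => (Px' t * Λ t) i j) := by
        filter_upwards [hIccnhds] with t ht
        rw [hrel' t ht i j]
      have hu' : HasDerivAt (fun t => f' j t i)
          (-((By * Cx z) i j) - (St * Px' z) i j) z := hu.congr_of_eventuallyEq hev
      -- match the value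
      have hval : (a j z • T (f' j z) + g j z) i
          = -((By * Cx z) i j) - (St * Px' z) i j := by
        have hTi : (T (f' j z)) i = (St * Px' z) i j * Λ z j j := by
          rw [hT]
          simp only [Matrix.mulVec, dotProduct, hf'_def, hρid z hzI, Matrix.mul_apply,
            Finset.sum_mul]
          apply Finset.sum_congr rfl
          intro x _
          ring
        simp only [Pi.add_apply, Pi.smul_apply, smul_eq_mul, hTi, hg_def, hρid z hzI,
          ha_def]
        have hne := hlamne j z hzI
        field_simp
        ring
      rw [hval]
      exact hu'
    -- boundary conditions for f'
    have hf'neg : ∀ j : Fin (nm+np), nm ≤ (j:ℕ) → f' j 1 = negInit j := by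
      intro j hj
      have h1mem : (1:ℝ) ∈ Icc (0:ℝ) 1 := right_mem_Icc.2 h01
      set k : Fin np := ⟨(j:ℕ) - nm, by omega⟩ with hk_def
      have hjk : emb k = j := by
        apply Fin.ext
        simp only [hemb_def, hk_def]
        omega
      funext i
      have hent := congrArg (fun M => M i k) hD4
      rw [Matrix.mul_apply, Matrix.mul_apply] at hent
      rw [hsumE (fun m => (Px' 1 * Λ 1) i m) k, hsumE (fun m => (By * Cx1) i m) k] at hent
      rw [hjk] at hent
      rw [← hrel' 1 h1mem i j]
      exact hent
    have hf'pos : ∀ (j : Fin (nm+np)) (hj : (j:ℕ) < nm), f' j 0 = posVal f' ⟨(j:ℕ), hj⟩ := by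
      intro j hj
      have hk := key3 Px' f' hf'c hrel' -- for all i jm
      funext i
      have hent := congrArg (fun M => M i (⟨(j:ℕ), hj⟩ : Fin nm)) hD3
      simp only [Matrix.sub_apply, Matrix.of_apply] at hent
      rw [hk i ⟨(j:ℕ), hj⟩] at hent
      rw [hPw'eq] at hent
      have hje : (⟨((⟨(j:ℕ), hj⟩ : Fin nm) : ℕ), by omega⟩ : Fin (nm+np)) = j :=
        Fin.ext rfl
      rw [hje] at hent
      have hR2 : Rm i ⟨(j:ℕ), hj⟩ = (Pw * Bw) i ⟨(j:ℕ), hj⟩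
          - (By * Cx0 * (Eplus nm np * Q₀ + Eminus nm np)) i ⟨(j:ℕ), hj⟩ := by
        rw [hRm_def, Matrix.sub_apply]
      linarith [hent, hR2]
    -- apply family uniqueness
    have huniq := hfuniq f' hf'c hf'ode hf'neg hf'pos
    constructor
    · intro z hz
      ext i j
      have h1 : Px' z i j * Λ z j j = f' j z i := by
        have := hrel' z hz i j
        rw [hdiagmul (Px' z) z hz i j] at this
        exact this
      have h2 : Px z i j * Λ z j j = f j z i := by
        have := hPxΛ z hz i j
        rw [hdiagmul (Px z) z hz i j] at this
        exact this
      have h3 : f' j z i = f j z i := by rw [huniq j z hz]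
      have hne := hlamne j z hz
      have := h1.trans (h3.trans h2.symm)
      exact mul_right_cancel₀ hne this
    · exact hPw'eq
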